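/- arXiv:1210.0377 — 2 statements merged into one kernel-verified Lean document; each statement's English description precedes it below -/
import Mathlib

section
/- For the staircase partition λ_n = (n, n−1, ..., 1, 0) in n+1 variables, all roots z of the univariate polynomial s_{kλ_n}(z, 1, 1, ..., 1) = 0 lie on the unit circle, for every positive integer k and every n. -/
open scoped BigOperators

/-- A partition: a weakly decreasing sequence of naturals that is eventually zero. -/
def IsPartition (f : ℕ → ℕ) : Prop :=
  (∀ i j, i ≤ j → f j ≤ f i) ∧ ∃ N, ∀ i, N ≤ i → f i = 0

/-- Data of a (skew) filling with entries bounded by `n`: the inner shape `inner`, and for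
each row the weakly increasing list of its entries.  The outer shape of the filling is
`inner i + (row i).length`, so skew boxes sit to the left of all entries of a row. -/
structure SkewTab (n : ℕ) where
  inner : ℕ → ℕ
  row : ℕ → List ℕ

namespace SkewTab

variable {n : ℕ}

/-- The outer shape. -/
def outer (T : SkewTab n) : ℕ → ℕ := fun i => T.inner i + (T.row i).length

/-- The entry in row `i`, column `j` (0-indexed); meaningful for `inner i ≤ j < outer i`. -/
def entry (T : SkewTab n) (i j : ℕ) : ℕ := (T.row i).getD (j - T.inner i) 0

/-- `T` is a semistandard Young tableau of skew shape `outer/inner` with entries in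
`{1,…,n}`: both shapes are partitions, rows are weakly increasing and columns are
strictly increasing. -/
def IsSSYT (T : SkewTab n) : Prop :=
  IsPartition T.inner ∧ IsPartition T.outer ∧
  (∀ i, (T.row i).Pairwise (· ≤ ·)) ∧
  (∀ i, ∀ x ∈ T.row i, 1 ≤ x ∧ x ≤ n) ∧
  (∀ i j, T.inner i ≤ j → j < T.outer i → T.inner (i+1) ≤ j → j < T.outer (i+1) →
    T.entry i j < T.entry (i+1) j)

/-- Tableau insertion `T1 ⊠ T2`: concatenate corresponding rows and sort each row
weakly increasingly; the skew boxes (inner shapes) add up and are pushed to the left,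
i.e. treated as smaller than all numbered entries. -/
def ins (T1 T2 : SkewTab n) : SkewTab n where
  inner := fun i => T1.inner i + T2.inner i
  row := fun i => (T1.row i ++ T2.row i).mergeSort (fun a b => decide (a ≤ b))

/-- The empty tableau. -/
def empty : SkewTab n := ⟨fun _ => 0, fun _ => []⟩

/-- The weight of `T`: `wt T k` is the number of boxes with entry `k`. -/
noncomputable def wt (T : SkewTab n) (k : ℕ) : ℕ := ∑ᶠ i, (T.row i).count k

/-- The `c`-th column of `T` (0-indexed), viewed as a single-column skew tableau
(keeping its skew boxes). -/
def col (T : SkewTab n) (c : ℕ) : SkewTab n where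
  inner := fun i => if c < T.inner i then 1 else 0
  row := fun i =>
    if T.inner i ≤ c ∧ c < T.outer i then [(T.row i).getD (c - T.inner i) 0] else []

end SkewTab

/-- The set of SSYTs of shape `mu/nu` with entries in `{1,…,n}`. -/
def Tabs (n : ℕ) (mu nu : ℕ → ℕ) : Set (SkewTab n) :=
  {T | T.IsSSYT ∧ T.inner = nu ∧ T.outer = mu}

/-- The monomial `x^w = x₁^{w₁} ⋯ xₙ^{wₙ}`. -/
noncomputable def xpow (n : ℕ) (w : Fin n → ℕ) : MvPolynomial (Fin n) ℤ :=
  ∏ k : Fin n, MvPolynomial.X k ^ w k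

/-- The monomial `x^{w(T)}` attached to a tableau `T` (variable `x_k` corresponds to
the entry `k ∈ {1,…,n}`). -/
noncomputable def xwt {n : ℕ} (T : SkewTab n) : MvPolynomial (Fin n) ℤ :=
  xpow n (fun k => T.wt ((k : ℕ) + 1))

/-- The skew Schur polynomial `s_{mu/nu}(x₁,…,xₙ) = Σ_T x^{w(T)}`. -/
noncomputable def schur (n : ℕ) (mu nu : ℕ → ℕ) : MvPolynomial (Fin n) ℤ :=
  ∑ᶠ T ∈ Tabs n mu nu, xwt T

/-- The Kostka number `K_{lam/mu,w}`: the number of SSYTs of shape `lam/mu` with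
entries in `{1,…,n}` and weight `w`. -/
noncomputable def kostka (n : ℕ) (lam mu : ℕ → ℕ) (w : Fin n → ℕ) : ℕ :=
  Nat.card {T : SkewTab n // T ∈ Tabs n lam mu ∧ ∀ k : Fin n, T.wt ((k : ℕ) + 1) = w k}

/-- The monomial symmetric polynomial `m_w`: the sum of `x^u` over the distinct
rearrangements `u` of `w`. -/
noncomputable def mSym (n : ℕ) (w : Fin n → ℕ) : MvPolynomial (Fin n) ℤ :=
  ∑ᶠ u ∈ {u : Fin n → ℕ | ∃ σ : Equiv.Perm (Fin n), u = w ∘ σ}, xpow n u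

/-- The characteristic polynomial `χ(t) = ∏_{T ∈ T^n_{mu/nu}} (t − x^{w(T)})`. -/
noncomputable def charPoly (n : ℕ) (mu nu : ℕ → ℕ) : Polynomial (MvPolynomial (Fin n) ℤ) :=
  ∏ᶠ T ∈ Tabs n mu nu, (Polynomial.X - Polynomial.C (xwt T))

/-- `mu/nu` sits inside `alpha/beta`: there is an injection `f` of column positions such
that for every row, column `j` of `mu/nu` has a cell (resp. a skew box) exactly when
column `f j` of `alpha/beta` does; i.e. every column of the diagram of `mu/nu` can be
found among the columns of the diagram of `alpha/beta`, counting multiplicities. -/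
def SitsInside (mu nu alpha beta : ℕ → ℕ) : Prop :=
  ∃ f : ℕ → ℕ, Function.Injective f ∧
    ∀ j i, ((nu i ≤ j ∧ j < mu i) ↔ (beta i ≤ f j ∧ f j < alpha i)) ∧
      (j < nu i ↔ f j < beta i)

section ListLemmas

variable {n : ℕ}

/-- On a sorted list with a downward-closed predicate, filter = takeWhile. -/
lemma sorted_filter_eq_takeWhile (l : List ℕ) (hl : l.Pairwise (· ≤ ·)) :
    l.filter (fun x => x ≤ n) = l.takeWhile (fun x => x ≤ n) := by
  induction l with
  | nil => rfl
  | cons a t ih =>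
    rcases List.pairwise_cons.mp hl with ⟨ha, ht⟩
    by_cases h : a ≤ n
    · simp [List.filter_cons, List.takeWhile_cons, h, ih ht]
    · rw [List.filter_cons, List.takeWhile_cons]
      simp only [decide_eq_true_eq, h, if_neg, if_false]
      rw [List.filter_eq_nil_iff.mpr]
      intro x hx
      simp only [decide_eq_true_eq]
      exact fun hxn => h (le_trans (ha x hx) hxn)

lemma sorted_dropWhile_eq_replicate (l : List ℕ) (hl : l.Pairwise (· ≤ ·))
    (hb : ∀ x ∈ l, x ≤ n + 1) :
    l.dropWhile (fun x => x ≤ n) =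
      List.replicate (l.length - (l.takeWhile (fun x => x ≤ n)).length) (n + 1) := by
  induction l with
  | nil => rfl
  | cons a t ih =>
    rcases List.pairwise_cons.mp hl with ⟨ha, ht⟩
    by_cases h : a ≤ n
    · simp only [List.dropWhile_cons, List.takeWhile_cons, decide_eq_true_eq, h, if_pos,
        List.length_cons]
      rw [ih ht (fun x hx => hb x (List.mem_cons_of_mem _ hx))]
      congr 1
      omega
    · have ha' : a = n + 1 := le_antisymm (hb a List.mem_cons_self) (by omega)
      simp only [List.dropWhile_cons, List.takeWhile_cons, decide_eq_true_eq, h, if_neg,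
        List.length_cons]
      have : ∀ x ∈ a :: t, x = n + 1 := by
        intro x hx
        rcases List.mem_cons.mp hx with rfl | hx
        · exact ha'
        · exact le_antisymm (hb x (List.mem_cons_of_mem _ hx)) (by
            have := ha x hx; omega)
      simp only [if_false, List.length_nil, Nat.sub_zero]
      exact List.eq_replicate_iff.mpr ⟨by simp, this⟩

end ListLemmas


namespace Stair

/-- the zero inner shape -/
notation "ν0" => (fun _ => 0 : ℕ → ℕ)

variable {n : ℕ}

lemma row_length {l : ℕ → ℕ} {T : SkewTab n} (hT : T ∈ Tabs n l ν0) (i : ℕ) :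
    (T.row i).length = l i := by
  obtain ⟨_, hi, ho⟩ := hT
  have := congrFun ho i
  rw [SkewTab.outer] at this
  rw [congrFun hi i] at this
  simpa using this

lemma row_sorted {l : ℕ → ℕ} {T : SkewTab n} (hT : T ∈ Tabs n l ν0) (i : ℕ) :
    (T.row i).Pairwise (· ≤ ·) := hT.1.2.2.1 i

lemma entry_eq_getD {T : SkewTab n} (hi : T.inner = ν0) (i j : ℕ) :
    T.entry i j = (T.row i).getD j 0 := by
  rw [SkewTab.entry, congrFun hi i]
  simp

lemma entry_mem {l : ℕ → ℕ} {T : SkewTab n} (hT : T ∈ Tabs n l ν0) {i j : ℕ}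
    (hj : j < l i) : T.entry i j ∈ T.row i := by
  rw [entry_eq_getD hT.2.1]
  have hlen : j < (T.row i).length := by rw [row_length hT]; exact hj
  rw [List.getD_eq_getElem _ _ hlen]
  exact List.getElem_mem hlen

lemma entry_bounds {l : ℕ → ℕ} {T : SkewTab n} (hT : T ∈ Tabs n l ν0) {i j : ℕ}
    (hj : j < l i) : 1 ≤ T.entry i j ∧ T.entry i j ≤ n :=
  hT.1.2.2.2.1 i _ (entry_mem hT hj)

lemma entry_strict {l : ℕ → ℕ} {T : SkewTab n} (hT : T ∈ Tabs n l ν0)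
    (hp : IsPartition l) {i j : ℕ} (hj : j < l (i + 1)) :
    T.entry i j < T.entry (i + 1) j := by
  have h1 : j < l i := lt_of_lt_of_le hj (hp.1 i (i+1) (Nat.le_succ i))
  have ho := hT.2.2
  have hi := hT.2.1
  refine hT.1.2.2.2.2 i j ?_ ?_ ?_ ?_
  · rw [congrFun hi i]; exact Nat.zero_le j
  · rw [congrFun ho i]; exact h1
  · rw [congrFun hi (i+1)]; exact Nat.zero_le j
  · rw [congrFun ho (i+1)]; exact hj

lemma entry_ge {l : ℕ → ℕ} {T : SkewTab n} (hT : T ∈ Tabs n l ν0)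
    (hp : IsPartition l) : ∀ i j, j < l i → i + 1 ≤ T.entry i j := by
  intro i
  induction i with
  | zero => exact fun j hj => (entry_bounds hT hj).1
  | succ i ih =>
    intro j hj
    have h1 : j < l i := lt_of_lt_of_le hj (hp.1 i (i+1) (Nat.le_succ i))
    have := entry_strict hT hp (i := i) (j := j) hj
    have := ih j h1
    omega

lemma tabs_finite (n : ℕ) (l : ℕ → ℕ) : (Tabs n l ν0).Finite := by
  rcases Set.eq_empty_or_nonempty (Tabs n l ν0) with h | ⟨T₀, hT₀⟩
  · rw [h]; exact Set.finite_empty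
  have hp : IsPartition l := by
    have := hT₀.1.2.1
    rwa [hT₀.2.2] at this
  apply Set.Finite.of_finite_image (f := fun (T : SkewTab n) (i : Fin ((hp.2).choose)) (j : Fin (l 0)) =>
    (⟨min ((T.row i).getD j 0) (n+1), by omega⟩ : Fin (n+2)))
  · exact Set.toFinite _
  · intro T hT T' hT' hf
    obtain ⟨Ti, Tr⟩ := T
    obtain ⟨Ti', Tr'⟩ := T'
    simp only [SkewTab.mk.injEq]
    constructor
    · exact hT.2.1.trans hT'.2.1.symm
    · funext i
      apply List.ext_getElem
      · rw [row_length hT i, row_length hT' i]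
      intro j hj hj'
      have hjl : j < l i := by rw [← row_length hT i]; exact hj
      by_cases hiN : i < (hp.2).choose
      · have hjM : j < l 0 := lt_of_lt_of_le hjl (hp.1 0 i (Nat.zero_le i))
        have := congrFun (congrFun hf ⟨i, hiN⟩) ⟨j, hjM⟩
        simp only [Fin.mk.injEq] at this
        have e1 : (Tr i).getD j 0 = (Tr i)[j] := List.getD_eq_getElem _ _ hj
        have e2 : (Tr' i).getD j 0 = (Tr' i)[j] := List.getD_eq_getElem _ _ hj'
        have b1 : (Tr i)[j] ≤ n := (hT.1.2.2.2.1 i _ (List.getElem_mem hj)).2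
        have b2 : (Tr' i)[j] ≤ n := (hT'.1.2.2.2.1 i _ (List.getElem_mem hj')).2
        rw [e1, e2] at this
        omega
      · exfalso
        have : l i = 0 := (hp.2).choose_spec i (by omega)
        omega

lemma schur_eq_sum (n : ℕ) (l : ℕ → ℕ) :
    schur n l ν0 = ∑ T ∈ (tabs_finite n l).toFinset, xwt T := by
  rw [schur, ← finsum_mem_coe_finset, Set.Finite.coe_toFinset]

lemma wt_eq_sum_range {l : ℕ → ℕ} {T : SkewTab n} (hT : T ∈ Tabs n l ν0) {B : ℕ}
    (hB : ∀ i, B ≤ i → l i = 0) (a : ℕ) :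
    T.wt a = ∑ i ∈ Finset.range B, (T.row i).count a := by
  rw [SkewTab.wt]
  apply finsum_eq_sum_of_support_subset
  intro i hi
  simp only [Function.mem_support] at hi
  simp only [Finset.coe_range, Set.mem_Iio]
  by_contra hiB
  have : l i = 0 := hB i (by omega)
  have : (T.row i).length = 0 := by rw [row_length hT i, this]
  rw [List.length_eq_zero_iff.mp this] at hi
  simp at hi

/-! ### Strip / join -/

def ext (n : ℕ) (g : Fin n → ℕ) : ℕ → ℕ := fun i => if h : i < n then g ⟨i, h⟩ else 0

def box (n : ℕ) (l : ℕ → ℕ) : Finset (Fin n → ℕ) :=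
  Fintype.piFinset fun c => Finset.Icc (l ((c : ℕ) + 1)) (l (c : ℕ))

def Wt (n : ℕ) (l : ℕ → ℕ) (g : Fin n → ℕ) : ℕ := l n + ∑ c : Fin n, (l (c : ℕ) - g c)

def strip (n : ℕ) (T : SkewTab (n + 1)) : SkewTab n :=
  ⟨fun _ => 0, fun i => (T.row i).takeWhile (fun x => decide (x ≤ n))⟩

def mf (n : ℕ) (T : SkewTab (n + 1)) : ℕ → ℕ :=
  fun i => ((T.row i).takeWhile (fun x => decide (x ≤ n))).length

def joinT (n : ℕ) (l : ℕ → ℕ) (g : Fin n → ℕ) (T' : SkewTab n) : SkewTab (n + 1) :=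
  ⟨fun _ => 0, fun i => T'.row i ++ List.replicate (l i - ext n g i) (n + 1)⟩

lemma anti_of_step {f : ℕ → ℕ} (h : ∀ i, f (i + 1) ≤ f i) : ∀ i j, i ≤ j → f j ≤ f i := by
  intro i j hij
  induction hij with
  | refl => exact le_rfl
  | step h' ih => exact le_trans (h _) ih

section StripJoin

variable {n : ℕ} {l : ℕ → ℕ} {T : SkewTab (n + 1)}
  (hp : IsPartition l) (hs : ∀ i, n + 1 ≤ i → l i = 0) (hT : T ∈ Tabs (n + 1) l ν0)

include hT in
lemma row_decomp (i : ℕ) :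
    T.row i = (T.row i).takeWhile (fun x => decide (x ≤ n)) ++
      List.replicate (l i - mf n T i) (n + 1) := by
  have hsrt := row_sorted hT i
  have hb : ∀ x ∈ T.row i, x ≤ n + 1 := fun x hx => (hT.1.2.2.2.1 i x hx).2
  conv_lhs => rw [← List.takeWhile_append_dropWhile (p := fun x => decide (x ≤ n)) (l := T.row i)]
  rw [sorted_dropWhile_eq_replicate _ hsrt hb, row_length hT i]
  rfl

include hT in
lemma mf_le (i : ℕ) : mf n T i ≤ l i := by
  rw [← row_length hT i]
  exact (List.takeWhile_prefix _).length_le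

include hT in
lemma entry_le_iff {i j : ℕ} (hj : j < l i) : T.entry i j ≤ n ↔ j < mf n T i := by
  have hd := row_decomp hT i
  have hlen : j < (T.row i).length := by rw [row_length hT i]; exact hj
  rw [entry_eq_getD hT.2.1]
  constructor
  · intro hle
    by_contra hge
    push_neg at hge
    rw [hd, List.getD_append_right _ _ _ _ hge] at hle
    have hidx : j - mf n T i < l i - mf n T i := by
      have := mf_le hT i; omega
    rw [List.getD_eq_getElem _ _ (by rw [List.length_replicate]; exact hidx)] at hle
    simp at hle
  · intro hlt
    rw [hd, List.getD_append _ _ _ _ hlt]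
    have := List.mem_takeWhile_imp (l := T.row i) (p := fun x => decide (x ≤ n))
      (x := ((T.row i).takeWhile (fun x => decide (x ≤ n))).getD j 0) ?_
    · simpa using this
    · rw [List.getD_eq_getElem _ _ hlt]
      exact List.getElem_mem hlt

include hT hp in
lemma interlace (i : ℕ) : l (i + 1) ≤ mf n T i := by
  rcases Nat.eq_zero_or_pos (l (i + 1)) with h0 | h0
  · omega
  have hj : l (i + 1) - 1 < l (i + 1) := by omega
  have hstrict := entry_strict hT hp hj
  have hb := (entry_bounds hT hj).2
  have hle : T.entry i (l (i + 1) - 1) ≤ n := by omega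
  have := (entry_le_iff hT (lt_of_lt_of_le hj (hp.1 i (i + 1) (Nat.le_succ i)))).mp hle
  omega

include hT hp in
lemma mf_anti (i : ℕ) : mf n T (i + 1) ≤ mf n T i := by
  rcases Nat.eq_zero_or_pos (mf n T (i + 1)) with h0 | h0
  · omega
  set j := mf n T (i + 1) - 1 with hjdef
  have hjm : j < mf n T (i + 1) := by omega
  have hjl : j < l (i + 1) := lt_of_lt_of_le hjm (mf_le hT (i + 1))
  have h2 : T.entry (i + 1) j ≤ n := (entry_le_iff hT hjl).mpr hjm
  have hstrict := entry_strict hT hp hjl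
  have : j < mf n T i := (entry_le_iff hT
    (lt_of_lt_of_le hjl (hp.1 i (i + 1) (Nat.le_succ i)))).mp (by omega)
  omega

include hT hp hs in
lemma mf_top (i : ℕ) (hi : n ≤ i) : mf n T i = 0 := by
  rcases Nat.lt_or_ge i (n + 1) with h | h
  · have hin : i = n := by omega
    by_contra h0
    have hj : 0 < mf n T i := by omega
    have hjl : 0 < l i := lt_of_lt_of_le hj (mf_le hT i)
    have e1 := (entry_le_iff hT hjl).mpr hj
    have e2 := entry_ge hT hp i 0 hjl
    omega
  · have h0 : (T.row i).length = 0 := by rw [row_length hT i, hs i h]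
    have h1 : T.row i = [] := List.length_eq_zero_iff.mp h0
    simp [mf, h1]

include hT hp hs in
lemma ext_mf : ext n (fun c : Fin n => mf n T (c : ℕ)) = mf n T := by
  funext i
  by_cases h : i < n
  · simp [ext, h]
  · rw [ext, dif_neg h, mf_top hp hs hT i (by omega)]

lemma strip_outer (T : SkewTab (n+1)) : (strip n T).outer = mf n T := by
  funext i
  simp [SkewTab.outer, strip, mf]

include hT hp hs in
lemma strip_mem : strip n T ∈ Tabs n (mf n T) ν0 := by
  refine ⟨⟨⟨fun _ _ _ => le_refl 0, ⟨0, fun _ _ => rfl⟩⟩, ?_, ?_, ?_, ?_⟩, rfl, ?_⟩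
  · rw [strip_outer]
    constructor
    · exact fun i j hij => anti_of_step (fun i => mf_anti hp hT i) i j hij
    · exact ⟨n, fun i hi => mf_top hp hs hT i hi⟩
  · intro i
    exact (row_sorted hT i).sublist (List.takeWhile_sublist _)
  · intro i x hx
    have hmem : x ∈ T.row i := (List.takeWhile_sublist _).subset hx
    refine ⟨(hT.1.2.2.2.1 i x hmem).1, ?_⟩
    have := List.mem_takeWhile_imp hx
    simpa using this
  · intro i j _ hj2 _ hj4
    rw [strip_outer] at hj2 hj4
    have hj2' : j < mf n T i := hj2
    have hj4' : j < mf n T (i + 1) := hj4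
    have e1 : (strip n T).entry i j = T.entry i j := by
      rw [SkewTab.entry, SkewTab.entry, hT.2.1]
      simp only [strip, Nat.sub_zero]
      conv_rhs => rw [row_decomp hT i]
      rw [List.getD_append _ _ _ _ hj2']
    have e2 : (strip n T).entry (i + 1) j = T.entry (i + 1) j := by
      rw [SkewTab.entry, SkewTab.entry, hT.2.1]
      simp only [strip, Nat.sub_zero]
      conv_rhs => rw [row_decomp hT (i + 1)]
      rw [List.getD_append _ _ _ _ hj4']
    rw [e1, e2]
    exact entry_strict hT hp (lt_of_lt_of_le hj4' (mf_le hT (i + 1)))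
  · exact strip_outer T

end StripJoin

section StripJoin2

open MvPolynomial

variable {n : ℕ} {l : ℕ → ℕ} {T : SkewTab (n + 1)}
  (hp : IsPartition l) (hs : ∀ i, n + 1 ≤ i → l i = 0) (hT : T ∈ Tabs (n + 1) l ν0)

include hT in
lemma count_strip (i a : ℕ) (ha : a ≤ n) :
    ((strip n T).row i).count a = (T.row i).count a := by
  conv_rhs => rw [row_decomp hT i]
  rw [List.count_append]
  have : (List.replicate (l i - mf n T i) (n + 1)).count a = 0 := by
    rw [List.count_replicate]
    simp only [beq_iff_eq]
    rw [if_neg (by omega)]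
  simp [strip, this]

include hT in
lemma count_top (i : ℕ) : (T.row i).count (n + 1) = l i - mf n T i := by
  conv_lhs => rw [row_decomp hT i]
  rw [List.count_append]
  have h1 : ((T.row i).takeWhile (fun x => decide (x ≤ n))).count (n + 1) = 0 := by
    rw [List.count_eq_zero]
    intro hmem
    have := List.mem_takeWhile_imp hmem
    simp at this
  have h2 : (List.replicate (l i - mf n T i) (n + 1)).count (n + 1) = l i - mf n T i := by
    simp
  omega

include hT hp hs in
lemma wt_strip (a : ℕ) (ha : a ≤ n) : (strip n T).wt a = T.wt a := by
  have hms : strip n T ∈ Tabs n (mf n T) ν0 := strip_mem hp hs hT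
  rw [wt_eq_sum_range hms (B := n + 1) (fun i hi => mf_top hp hs hT i (by omega)) a,
    wt_eq_sum_range hT hs a]
  exact Finset.sum_congr rfl fun i _ => count_strip hT i a ha

include hT hp hs in
lemma wt_last : T.wt (n + 1) = Wt n l (fun c : Fin n => mf n T (c : ℕ)) := by
  rw [wt_eq_sum_range hT hs]
  rw [Finset.sum_congr rfl fun i _ => count_top hT i]
  rw [Finset.sum_range_succ, mf_top hp hs hT n le_rfl, Wt]
  rw [← Fin.sum_univ_eq_sum_range (fun i => l i - mf n T i) n]
  omega

include hT hp hs in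
lemma xwt_strip :
    xwt T = MvPolynomial.rename Fin.castSucc (xwt (strip n T)) *
      MvPolynomial.X (Fin.last n) ^ Wt n l (fun c : Fin n => mf n T (c : ℕ)) := by
  rw [xwt, xwt, xpow, xpow, map_prod, Fin.prod_univ_castSucc]
  congr 1
  · apply Finset.prod_congr rfl
    intro k _
    rw [map_pow, rename_X]
    congr 1
    rw [Fin.coe_castSucc]
    exact (wt_strip hp hs hT ((k : ℕ) + 1) (by omega)).symm
  · rw [Fin.val_last]
    congr 1
    exact wt_last hp hs hT

end StripJoin2

section JoinSide

variable {n : ℕ} {l : ℕ → ℕ} {g : Fin n → ℕ} {T' : SkewTab n}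
  (hp : IsPartition l) (hs : ∀ i, n + 1 ≤ i → l i = 0)
  (hg : g ∈ box n l) (hT' : T' ∈ Tabs n (ext n g) ν0)

lemma box_iff : g ∈ box n l ↔ ∀ c : Fin n, l ((c : ℕ) + 1) ≤ g c ∧ g c ≤ l (c : ℕ) := by
  rw [box, Fintype.mem_piFinset]
  simp [Finset.mem_Icc]

include hg in
lemma ext_le (i : ℕ) : ext n g i ≤ l i := by
  by_cases h : i < n
  · rw [ext, dif_pos h]
    exact ((box_iff.mp hg) ⟨i, h⟩).2
  · rw [ext, dif_neg h]
    exact Nat.zero_le _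

include hg hs in
lemma ext_lower (i : ℕ) : l (i + 1) ≤ ext n g i := by
  by_cases h : i < n
  · rw [ext, dif_pos h]
    exact ((box_iff.mp hg) ⟨i, h⟩).1
  · rw [hs (i + 1) (by omega)]
    exact Nat.zero_le _

include hg hs in
lemma ext_part : IsPartition (ext n g) := by
  constructor
  · exact anti_of_step (fun i => le_trans (ext_le hg (i + 1)) (ext_lower hs hg i))
  · exact ⟨n, fun i hi => by rw [ext, dif_neg (by omega)]⟩

include hT' in
lemma join_row_len (i : ℕ) : ((joinT n l g T').row i).length = ext n g i + (l i - ext n g i) := by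
  simp [joinT, row_length hT' i]

include hT' hg in
lemma join_outer : (joinT n l g T').outer = l := by
  funext i
  have h2 := ext_le hg (l := l) i
  simp only [SkewTab.outer, joinT]
  rw [List.length_append, row_length hT' i]
  simp only [List.length_replicate]
  omega

include hT' in
lemma je1 {i j : ℕ} (hj : j < ext n g i) : (joinT n l g T').entry i j = T'.entry i j := by
  rw [entry_eq_getD rfl, entry_eq_getD hT'.2.1]
  simp only [joinT]
  rw [List.getD_append]
  rw [row_length hT' i]
  exact hj

include hT' in
lemma je2 {i j : ℕ} (h1 : ext n g i ≤ j) (hj : j < l i) :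
    (joinT n l g T').entry i j = n + 1 := by
  rw [entry_eq_getD rfl]
  simp only [joinT]
  rw [List.getD_append_right _ _ _ _ (by rw [row_length hT' i]; exact h1)]
  rw [row_length hT' i]
  have hidx : j - ext n g i < l i - ext n g i := by omega
  rw [List.getD_eq_getElem _ _ (by simpa using hidx)]
  simp

include hT' hg hp hs in
lemma join_mem : joinT n l g T' ∈ Tabs (n + 1) l ν0 := by
  have hgs := box_iff.mp hg
  refine ⟨⟨⟨fun _ _ _ => le_refl 0, ⟨0, fun _ _ => rfl⟩⟩, ?_, ?_, ?_, ?_⟩, rfl, join_outer hg hT'⟩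
  · rw [join_outer hg hT']
    exact hp
  · intro i
    rw [joinT]
    simp only
    rw [List.pairwise_append]
    refine ⟨row_sorted hT' i, ?_, ?_⟩
    · exact List.pairwise_replicate.mpr (Or.inr le_rfl)
    · intro x hx y hy
      have hxn : x ≤ n := (hT'.1.2.2.2.1 i x hx).2
      have hyn : y = n + 1 := List.eq_of_mem_replicate hy
      omega
  · intro i x hx
    simp only [joinT, List.mem_append] at hx
    rcases hx with hx | hx
    · have := hT'.1.2.2.2.1 i x hx
      omega
    · have := List.eq_of_mem_replicate hx
      omega
  · intro i j hj1 hj2 hj3 hj4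
    rw [join_outer hg hT'] at hj2 hj4
    by_cases hcase : j < ext n g (i + 1)
    · rw [je1 hT' hcase, je1 hT' (lt_of_lt_of_le hcase
        (le_trans (ext_le hg (i + 1)) (ext_lower hs hg i)))]
      exact entry_strict hT' (ext_part hs hg) hcase
    · rw [je2 hT' (by omega) hj4]
      have hji : j < ext n g i := lt_of_lt_of_le hj4 (ext_lower hs hg i)
      rw [je1 hT' hji]
      have := (entry_bounds hT' hji).2
      omega

include hT' hg hp hs in
lemma sj_row (i : ℕ) :
    ((joinT n l g T').row i).takeWhile (fun x => decide (x ≤ n)) = T'.row i := by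
  have hj := join_mem hp hs hg hT'
  have hsorted := row_sorted hj i
  rw [← sorted_filter_eq_takeWhile _ hsorted]
  show List.filter _ (T'.row i ++ List.replicate (l i - ext n g i) (n + 1)) = T'.row i
  rw [List.filter_append]
  have h1 : (T'.row i).filter (fun x => decide (x ≤ n)) = T'.row i := by
    rw [List.filter_eq_self]
    intro a ha
    simpa using (hT'.1.2.2.2.1 i a ha).2
  have h2 : (List.replicate (l i - ext n g i) (n + 1)).filter (fun x => decide (x ≤ n)) = [] := by
    rw [List.filter_eq_nil_iff]
    intro a ha
    have := List.eq_of_mem_replicate ha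
    simp [this]
  rw [h1, h2, List.append_nil]

include hT' hg hp hs in
lemma mf_join (i : ℕ) : mf n (joinT n l g T') i = ext n g i := by
  rw [mf, sj_row hp hs hg hT' i, row_length hT' i]

include hT' hg hp hs in
lemma phi_join : (fun c : Fin n => mf n (joinT n l g T') (c : ℕ)) = g := by
  funext c
  rw [mf_join hp hs hg hT' (c : ℕ), ext, dif_pos c.isLt]

lemma skewtab_ext {m : ℕ} {A B : SkewTab m} (h1 : A.inner = B.inner) (h2 : A.row = B.row) :
    A = B := by
  cases A; cases B
  simp_all

include hT' hg hp hs in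
lemma strip_join : strip n (joinT n l g T') = T' := by
  apply skewtab_ext
  · exact hT'.2.1.symm
  · funext i
    exact sj_row hp hs hg hT' i

end JoinSide

section JS3

variable {n : ℕ} {l : ℕ → ℕ} {T : SkewTab (n + 1)}
  (hp : IsPartition l) (hs : ∀ i, n + 1 ≤ i → l i = 0) (hT : T ∈ Tabs (n + 1) l ν0)

include hT hp hs in
lemma join_strip : joinT n l (fun c : Fin n => mf n T (c : ℕ)) (strip n T) = T := by
  apply skewtab_ext
  · exact hT.2.1.symm
  · funext i
    show (strip n T).row i ++ List.replicate (l i - ext n (fun c : Fin n => mf n T (c : ℕ)) i) (n + 1)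
        = T.row i
    rw [ext_mf hp hs hT]
    exact (row_decomp hT i).symm

include hT hp hs in
lemma phi_mem_box : (fun c : Fin n => mf n T (c : ℕ)) ∈ box n l := by
  rw [box_iff]
  intro c
  exact ⟨interlace hp hT (c : ℕ), mf_le hT (c : ℕ)⟩

end JS3

theorem schur_branch (n : ℕ) (l : ℕ → ℕ) (hp : IsPartition l)
    (hs : ∀ i, n + 1 ≤ i → l i = 0) :
    schur (n + 1) l ν0 = ∑ g ∈ box n l,
      MvPolynomial.rename Fin.castSucc (schur n (ext n g) ν0) *
        MvPolynomial.X (Fin.last n) ^ Wt n l g := by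
  rw [schur_eq_sum]
  rw [Finset.sum_congr rfl (fun g (hg : g ∈ box n l) => by
    rw [schur_eq_sum n (ext n g), map_sum, Finset.sum_mul] :
      ∀ g ∈ box n l, _ = ∑ T' ∈ (tabs_finite n (ext n g)).toFinset,
        MvPolynomial.rename Fin.castSucc (xwt T') * MvPolynomial.X (Fin.last n) ^ Wt n l g)]
  rw [Finset.sum_sigma']
  apply Finset.sum_nbij' (i := fun T => (⟨fun c : Fin n => mf n T (c : ℕ), strip n T⟩ :
      (g : Fin n → ℕ) × SkewTab n)) (j := fun p => joinT n l p.1 p.2)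
  · intro T hTmem
    have hT : T ∈ Tabs (n + 1) l ν0 := (Set.Finite.mem_toFinset _).mp hTmem
    rw [Finset.mem_sigma]
    refine ⟨phi_mem_box hp hs hT, ?_⟩
    rw [Set.Finite.mem_toFinset]
    rw [ext_mf hp hs hT]
    exact strip_mem hp hs hT
  · intro p hpmem
    rw [Finset.mem_sigma] at hpmem
    obtain ⟨hg, hT'⟩ := hpmem
    rw [Set.Finite.mem_toFinset] at hT' ⊢
    exact join_mem hp hs hg hT'
  · intro T hTmem
    have hT : T ∈ Tabs (n + 1) l ν0 := (Set.Finite.mem_toFinset _).mp hTmem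
    exact join_strip hp hs hT
  · intro p hpmem
    rw [Finset.mem_sigma] at hpmem
    obtain ⟨hg, hT'⟩ := hpmem
    rw [Set.Finite.mem_toFinset] at hT'
    obtain ⟨g, T'⟩ := p
    have h1 := phi_join hp hs hg hT'
    have h2 := strip_join hp hs hg hT'
    simp only [h1, h2]
  · intro T hTmem
    have hT : T ∈ Tabs (n + 1) l ν0 := (Set.Finite.mem_toFinset _).mp hTmem
    exact xwt_strip hp hs hT

/-! ### Determinant tools -/

section DetTools

variable {R : Type*} [CommRing R]

lemma telescope (x y : R) (a b e : ℕ) (hab : a ≤ b) :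
    (x - y) * (∑ m ∈ Finset.Icc a b, x ^ (m + e) * y ^ (b - m)) =
      x ^ (b + e + 1) - y ^ (b - a + 1) * x ^ (a + e) := by
  have h1 : ∑ m ∈ Finset.Icc a b, x ^ (m + e) * y ^ (b - m) =
      x ^ (a + e) * ∑ m ∈ Finset.range (b + 1 - a), x ^ m * y ^ ((b + 1 - a) - 1 - m) := by
    rw [← Finset.Ico_add_one_right_eq_Icc, Finset.sum_Ico_eq_sum_range, Finset.mul_sum]
    apply Finset.sum_congr rfl
    intro m hm
    rw [Finset.mem_range] at hm
    have hy : b - (a + m) = (b + 1 - a) - 1 - m := by omega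
    rw [hy, ← mul_assoc, ← pow_add]
    congr 2
    omega
  rw [h1]
  have h3 : (x - y) * (x ^ (a + e) * ∑ m ∈ Finset.range (b + 1 - a),
      x ^ m * y ^ ((b + 1 - a) - 1 - m)) =
      x ^ (a + e) * ((∑ m ∈ Finset.range (b + 1 - a),
        x ^ m * y ^ ((b + 1 - a) - 1 - m)) * (x - y)) := by ring
  rw [h3, geom_sum₂_mul, mul_sub, ← pow_add]
  have e1 : a + e + (b + 1 - a) = b + e + 1 := by omega
  have e2 : b + 1 - a = b - a + 1 := by omega
  rw [e1, e2, mul_comm (x ^ (a + e)) (y ^ (b - a + 1))]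

/-- Sequential column reduction `C_c ← C_c - coef c • C_{c+1}` preserves the determinant. -/
lemma colred (n : ℕ) (M : Matrix (Fin (n + 1)) (Fin (n + 1)) R) (coef : ℕ → R) :
    (Matrix.of fun i c : Fin (n + 1) =>
      if h : (c : ℕ) < n then M i c - coef (c : ℕ) * M i ⟨(c : ℕ) + 1, by omega⟩ else M i c).det
      = M.det := by
  suffices h : ∀ t, ∀ ht : t ≤ n, (Matrix.of fun i c : Fin (n + 1) =>
      if h : (c : ℕ) < t then M i c - coef (c : ℕ) * M i ⟨(c : ℕ) + 1, by omega⟩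
      else M i c).det = M.det by exact h n le_rfl
  intro t
  induction t with
  | zero =>
    intro _
    refine congrArg Matrix.det ?_
    ext i c
    simp
  | succ t ih =>
    intro ht
    have htn : t < n + 1 := by omega
    have htn' : t + 1 < n + 1 := by omega
    have hne : (⟨t, htn⟩ : Fin (n + 1)) ≠ ⟨t + 1, htn'⟩ := by
      intro h
      have := congrArg (Fin.val) h
      simp at this
    set B : Matrix (Fin (n + 1)) (Fin (n + 1)) R := Matrix.of fun i c : Fin (n + 1) =>
      if h : (c : ℕ) < t then M i c - coef (c : ℕ) * M i ⟨(c : ℕ) + 1, by omega⟩ else M i c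
      with hB
    have key : (Matrix.of fun i c : Fin (n + 1) =>
        if h : (c : ℕ) < t + 1 then M i c - coef (c : ℕ) * M i ⟨(c : ℕ) + 1, by omega⟩
        else M i c) =
        Matrix.updateCol B ⟨t, htn⟩
          (fun k => B k ⟨t, htn⟩ + (- coef t) • B k ⟨t + 1, htn'⟩) := by
      ext i c
      rw [Matrix.updateCol_apply]
      by_cases hc : c = ⟨t, htn⟩
      · subst hc
        rw [if_pos rfl]
        simp only [hB, Matrix.of_apply]
        rw [dif_pos (show t < t + 1 by omega), dif_neg (show ¬ (t < t) by omega),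
          dif_neg (show ¬ (t + 1 < t) by omega)]
        show M i ⟨t, htn⟩ - coef t * M i ⟨t + 1, htn'⟩ =
          M i ⟨t, htn⟩ + (- coef t) • M i ⟨t + 1, htn'⟩
        simp only [smul_eq_mul]
        ring
      · rw [if_neg hc]
        simp only [hB, Matrix.of_apply]
        have hcv : (c : ℕ) ≠ t := fun h => hc (Fin.ext h)
        by_cases h1 : (c : ℕ) < t
        · rw [dif_pos (show (c : ℕ) < t + 1 by omega), dif_pos h1]
        · rw [dif_neg (show ¬ ((c : ℕ) < t + 1) by omega), dif_neg h1]
    rw [key, Matrix.det_updateCol_add_smul_self _ hne, ih (by omega)]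

/-- Splitting the product over pairs in `Fin (n+1)`. -/
lemma prodpairs_succ (n : ℕ) (w : Fin (n + 1) → R) :
    (∏ j : Fin (n + 1), ∏ i : Fin (n + 1), if i < j then (w i - w j) else 1) =
      (∏ j : Fin n, ∏ i : Fin n, if i < j then (w i.castSucc - w j.castSucc) else 1) *
        ∏ i : Fin n, (w i.castSucc - w (Fin.last n)) := by
  rw [Fin.prod_univ_castSucc]
  congr 1
  · apply Finset.prod_congr rfl
    intro j _
    rw [Fin.prod_univ_castSucc]
    have hlast : ¬ (Fin.last n < j.castSucc) := by
      rw [Fin.lt_def]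
      simp only [Fin.val_last, Fin.coe_castSucc]
      omega
    rw [if_neg hlast, mul_one]
    apply Finset.prod_congr rfl
    intro i _
    simp only [Fin.castSucc_lt_castSucc_iff]
  · rw [Fin.prod_univ_castSucc]
    rw [if_neg (lt_irrefl _), mul_one]
    apply Finset.prod_congr rfl
    intro i _
    rw [if_pos (Fin.castSucc_lt_last i)]

lemma det_rev_vandermonde : ∀ (n : ℕ) (v : Fin n → R),
    (Matrix.of fun i c : Fin n => v i ^ (n - 1 - (c : ℕ))).det =
      ∏ j : Fin n, ∏ i : Fin n, if i < j then (v i - v j) else 1 := by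
  intro n
  induction n with
  | zero => intro v; simp [Matrix.det_isEmpty]
  | succ n ih =>
    intro v
    set M0 : Matrix (Fin (n + 1)) (Fin (n + 1)) R :=
      Matrix.of fun i c : Fin (n + 1) => v i ^ (n - (c : ℕ)) with hM0
    set NN : Matrix (Fin (n + 1)) (Fin (n + 1)) R := Matrix.of fun i c : Fin (n + 1) =>
      if h : (c : ℕ) < n then v i ^ (n - (c : ℕ)) - v (Fin.last n) * v i ^ (n - ((c : ℕ) + 1))
      else v i ^ (n - (c : ℕ)) with hNN
    have hred : NN.det = M0.det := colred n M0 (fun _ => v (Fin.last n))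
    have hstart : (Matrix.of fun i c : Fin (n + 1) => v i ^ (n + 1 - 1 - (c : ℕ))) = M0 := by
      ext i c
      have he : n + 1 - 1 - (c : ℕ) = n - (c : ℕ) := by omega
      simp only [hM0, Matrix.of_apply, he]
    rw [hstart, ← hred]
    rw [Matrix.det_succ_row NN (Fin.last n)]
    have hzero : ∀ c : Fin (n + 1), c ≠ Fin.last n → NN (Fin.last n) c = 0 := by
      intro c hc
      have hcn : (c : ℕ) < n := by
        have h1 := c.isLt
        have h2 : (c : ℕ) ≠ n := fun h => hc (Fin.ext (by simp [h, Fin.val_last]))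
        omega
      simp only [hNN, Matrix.of_apply, dif_pos hcn]
      have he : n - (c : ℕ) = (n - ((c : ℕ) + 1)) + 1 := by omega
      rw [he, pow_succ]
      ring
    rw [Finset.sum_eq_single (Fin.last n)]
    · have hcorner : NN (Fin.last n) (Fin.last n) = 1 := by
        simp only [hNN, Matrix.of_apply, Fin.val_last]
        rw [dif_neg (by omega)]
        simp
      rw [hcorner]
      have hsign : (-1 : R) ^ ((Fin.last n : ℕ) + (Fin.last n : ℕ)) = 1 :=
        Even.neg_one_pow ⟨n, by simp [Fin.val_last]⟩
      rw [hsign]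
      have hsub : (NN.submatrix (Fin.last n).succAbove (Fin.last n).succAbove) =
          Matrix.of fun i c : Fin n =>
            (v i.castSucc - v (Fin.last n)) * (v i.castSucc ^ (n - 1 - (c : ℕ))) := by
        ext i c
        simp only [Matrix.submatrix_apply, Fin.succAbove_last]
        have hcn : ((c.castSucc : Fin (n + 1)) : ℕ) < n := by
          simp only [Fin.coe_castSucc]
          exact c.isLt
        simp only [hNN, Matrix.of_apply, dif_pos hcn]
        have hc1 : n - ((c.castSucc : Fin (n + 1)) : ℕ) = (n - 1 - (c : ℕ)) + 1 := by
          have := c.isLt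
          simp only [Fin.coe_castSucc]
          omega
        have hc2 : n - (((c.castSucc : Fin (n + 1)) : ℕ) + 1) = n - 1 - (c : ℕ) := by
          have := c.isLt
          simp only [Fin.coe_castSucc]
          omega
        rw [hc1, hc2, pow_succ]
        ring
      rw [hsub]
      rw [show (Matrix.of fun i c : Fin n =>
            (v i.castSucc - v (Fin.last n)) * (v i.castSucc ^ (n - 1 - (c : ℕ)))) =
          Matrix.of fun i c : Fin n =>
            (fun i : Fin n => v i.castSucc - v (Fin.last n)) i *
              (Matrix.of fun i c : Fin n => v i.castSucc ^ (n - 1 - (c : ℕ))) i c from rfl]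
      rw [Matrix.det_mul_column]
      rw [ih (fun i => v i.castSucc)]
      rw [prodpairs_succ n v]
      ring
    · intro c _ hc
      rw [hzero c hc]
      ring
    · intro h
      exact absurd (Finset.mem_univ _) h

end DetTools

/-! ### Alternants -/

section Alt

open MvPolynomial

noncomputable def altM (n : ℕ) (l : ℕ → ℕ) : MvPolynomial (Fin n) ℤ :=
  (Matrix.of fun i c : Fin n =>
    (X i : MvPolynomial (Fin n) ℤ) ^ (l (c : ℕ) + (n - 1 - (c : ℕ)))).det

noncomputable def vandP (n : ℕ) : MvPolynomial (Fin n) ℤ :=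
  ∏ j : Fin n, ∏ i : Fin n, if i < j then (X i - X j) else 1

lemma vandP_succ (n : ℕ) :
    vandP (n + 1) = (rename Fin.castSucc (vandP n)) *
      ∏ i : Fin n, (X i.castSucc - X (Fin.last n)) := by
  rw [vandP, prodpairs_succ n (fun j => (X j : MvPolynomial (Fin (n + 1)) ℤ))]
  congr 1
  rw [vandP, map_prod]
  apply Finset.prod_congr rfl
  intro j _
  rw [map_prod]
  apply Finset.prod_congr rfl
  intro i _
  rw [apply_ite (rename Fin.castSucc), map_sub, rename_X, rename_X, map_one]

lemma schur_zero (l : ℕ → ℕ) (hs : ∀ i, l i = 0) : schur 0 l ν0 = 1 := by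
  have hset : Tabs 0 l ν0 = {(⟨fun _ => 0, fun _ => []⟩ : SkewTab 0)} := by
    ext T
    simp only [Set.mem_singleton_iff]
    constructor
    · intro hT
      apply skewtab_ext
      · exact hT.2.1
      · funext i
        have hlen := row_length hT i
        rw [hs i] at hlen
        exact List.length_eq_zero_iff.mp hlen
    · rintro rfl
      refine ⟨⟨⟨fun _ _ _ => le_rfl, ⟨0, fun _ _ => rfl⟩⟩, ?_, fun i => List.Pairwise.nil,
        fun i x hx => absurd hx List.not_mem_nil, fun i j h1 h2 h3 h4 => ?_⟩, rfl, ?_⟩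
      · exact ⟨fun _ _ _ => le_rfl, ⟨0, fun _ _ => rfl⟩⟩
      · simp [SkewTab.outer] at h2
      · funext i
        show 0 + 0 = l i
        rw [hs i]
  rw [schur, hset, finsum_mem_singleton, xwt, xpow]
  simp

theorem schur_alt (n : ℕ) : ∀ (l : ℕ → ℕ), IsPartition l → (∀ i, n ≤ i → l i = 0) →
    schur n l ν0 * vandP n = altM n l := by
  induction n with
  | zero =>
    intro l hp hs
    rw [schur_zero l (fun i => hs i (Nat.zero_le i)), vandP, altM]
    simp [Matrix.det_isEmpty]
  | succ n ih =>
    intro l hp hs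
    rw [schur_branch n l hp hs, vandP_succ, Finset.sum_mul]
    have hterm : ∀ g ∈ box n l,
        (rename Fin.castSucc (schur n (ext n g) ν0) * X (Fin.last n) ^ Wt n l g) *
          (rename Fin.castSucc (vandP n) * ∏ i : Fin n, (X i.castSucc - X (Fin.last n)))
        = rename Fin.castSucc (altM n (ext n g)) *
            (∏ i : Fin n, (X i.castSucc - X (Fin.last n))) * X (Fin.last n) ^ Wt n l g := by
      intro g hg
      have hIH := ih (ext n g) (ext_part hs hg)
        (fun i hi => by rw [ext, dif_neg (by omega)])
      rw [show (rename Fin.castSucc (schur n (ext n g) ν0) * X (Fin.last n) ^ Wt n l g) *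
          (rename Fin.castSucc (vandP n) * ∏ i : Fin n, (X i.castSucc - X (Fin.last n)))
        = (rename Fin.castSucc (schur n (ext n g) ν0) * rename Fin.castSucc (vandP n)) *
            (∏ i : Fin n, (X i.castSucc - X (Fin.last n))) * X (Fin.last n) ^ Wt n l g
        by ring, ← map_mul, hIH]
    rw [Finset.sum_congr rfl hterm]
    -- now the determinant side
    set M0 : Matrix (Fin (n + 1)) (Fin (n + 1)) (MvPolynomial (Fin (n + 1)) ℤ) :=
      Matrix.of fun i c : Fin (n + 1) =>
        (X i : MvPolynomial (Fin (n + 1)) ℤ) ^ (l (c : ℕ) + (n - (c : ℕ))) with hM0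
    set coef : ℕ → MvPolynomial (Fin (n + 1)) ℤ :=
      fun c => (X (Fin.last n) : MvPolynomial (Fin (n + 1)) ℤ) ^ (l c - l (c + 1) + 1) with hcoef
    set NN : Matrix (Fin (n + 1)) (Fin (n + 1)) (MvPolynomial (Fin (n + 1)) ℤ) :=
      Matrix.of fun i c : Fin (n + 1) =>
        if h : (c : ℕ) < n then M0 i c - coef (c : ℕ) * M0 i ⟨(c : ℕ) + 1, by omega⟩
        else M0 i c with hNN
    have haltM : altM (n + 1) l = M0.det := by
      rw [altM]
      rfl
    have hred : NN.det = M0.det := colred n M0 coef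
    rw [haltM, ← hred]
    rw [Matrix.det_succ_row NN (Fin.last n)]
    have hzero : ∀ c : Fin (n + 1), c ≠ Fin.last n → NN (Fin.last n) c = 0 := by
      intro c hc
      have hcn : (c : ℕ) < n := by
        have h1 := c.isLt
        have h2 : (c : ℕ) ≠ n := fun h => hc (Fin.ext (by simp [h, Fin.val_last]))
        omega
      simp only [hNN, Matrix.of_apply, dif_pos hcn, hM0, hcoef]
      rw [← pow_add]
      have he : l (c : ℕ) - l ((c : ℕ) + 1) + 1 + (l ((c : ℕ) + 1) + (n - ((c : ℕ) + 1)))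
          = l (c : ℕ) + (n - (c : ℕ)) := by
        have := hp.1 (c : ℕ) ((c : ℕ) + 1) (Nat.le_succ _)
        omega
      rw [he, sub_self]
    rw [Finset.sum_eq_single (Fin.last n)]
    · have hcorner : NN (Fin.last n) (Fin.last n) =
          (X (Fin.last n) : MvPolynomial (Fin (n + 1)) ℤ) ^ (l n) := by
        simp only [hNN, Matrix.of_apply, Fin.val_last]
        rw [dif_neg (by omega)]
        simp only [hM0, Matrix.of_apply, Fin.val_last, Nat.sub_self, add_zero]
      rw [hcorner]
      have hsign : (-1 : MvPolynomial (Fin (n + 1)) ℤ) ^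
          ((Fin.last n : ℕ) + (Fin.last n : ℕ)) = 1 :=
        Even.neg_one_pow ⟨n, by simp [Fin.val_last]⟩
      rw [hsign]
      have hsub : (NN.submatrix (Fin.last n).succAbove (Fin.last n).succAbove) =
          Matrix.of fun i c : Fin n =>
            (fun i : Fin n => (X i.castSucc - X (Fin.last n) : MvPolynomial (Fin (n + 1)) ℤ)) i *
              (Matrix.of fun i c : Fin n =>
                ∑ m ∈ Finset.Icc (l ((c : ℕ) + 1)) (l (c : ℕ)),
                  (X i.castSucc : MvPolynomial (Fin (n + 1)) ℤ) ^ (m + (n - 1 - (c : ℕ))) *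
                    X (Fin.last n) ^ (l (c : ℕ) - m)) i c := by
        refine Matrix.ext fun i c => ?_
        have hcn : (c : ℕ) < n := c.isLt
        simp only [Matrix.submatrix_apply, Fin.succAbove_last, hNN, Matrix.of_apply,
          Fin.coe_castSucc, dif_pos hcn, hM0, hcoef]
        have he1 : l (c : ℕ) + (n - (c : ℕ)) = l (c : ℕ) + (n - 1 - (c : ℕ)) + 1 := by
          omega
        have he2 : l ((c : ℕ) + 1) + (n - ((c : ℕ) + 1)) = l ((c : ℕ) + 1) + (n - 1 - (c : ℕ)) := by
          omega
        rw [he1, he2]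
        exact (telescope _ _ _ _ _ (hp.1 (c : ℕ) ((c : ℕ) + 1) (Nat.le_succ _))).symm
      rw [hsub, Matrix.det_mul_column]
      -- expand det of the sum-matrix multilinearly
      set G : Matrix (Fin n) (Fin n) (MvPolynomial (Fin (n + 1)) ℤ) :=
        Matrix.of fun i c : Fin n =>
          ∑ m ∈ Finset.Icc (l ((c : ℕ) + 1)) (l (c : ℕ)),
            (X i.castSucc : MvPolynomial (Fin (n + 1)) ℤ) ^ (m + (n - 1 - (c : ℕ))) *
              X (Fin.last n) ^ (l (c : ℕ) - m) with hG
      have hGdet : G.det = ∑ r ∈ box n l,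
          X (Fin.last n) ^ (∑ c : Fin n, (l (c : ℕ) - r c)) *
            rename Fin.castSucc (altM n (ext n r)) := by
        rw [← Matrix.det_transpose G]
        have htr : G.transpose = fun c : Fin n => ∑ m ∈ Finset.Icc (l ((c : ℕ) + 1)) (l (c : ℕ)),
            (fun i : Fin n => (X i.castSucc : MvPolynomial (Fin (n + 1)) ℤ) ^
              (m + (n - 1 - (c : ℕ))) * X (Fin.last n) ^ (l (c : ℕ) - m)) := by
          funext c i
          simp only [Matrix.transpose_apply, hG, Matrix.of_apply, Finset.sum_apply]
        have hmulti := (Matrix.detRowAlternating (n := Fin n)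
            (R := MvPolynomial (Fin (n + 1)) ℤ)).toMultilinearMap.map_sum_finset
          (A := fun c : Fin n => Finset.Icc (l ((c : ℕ) + 1)) (l (c : ℕ)))
          (g := fun c m => fun i : Fin n =>
            (X i.castSucc : MvPolynomial (Fin (n + 1)) ℤ) ^ (m + (n - 1 - (c : ℕ))) *
              X (Fin.last n) ^ (l (c : ℕ) - m))
        simp only [AlternatingMap.coe_multilinearMap] at hmulti
        show Matrix.detRowAlternating G.transpose = _
        rw [htr, hmulti]
        apply Finset.sum_congr rfl
        intro r hr
        have hrow : (fun c : Fin n => (fun i : Fin n =>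
            (X i.castSucc : MvPolynomial (Fin (n + 1)) ℤ) ^ (r c + (n - 1 - (c : ℕ))) *
              X (Fin.last n) ^ (l (c : ℕ) - r c))) =
            fun c : Fin n => (X (Fin.last n) : MvPolynomial (Fin (n + 1)) ℤ) ^ (l (c : ℕ) - r c) •
              (fun i : Fin n =>
                (X i.castSucc : MvPolynomial (Fin (n + 1)) ℤ) ^ (r c + (n - 1 - (c : ℕ)))) := by
          funext c i
          simp [smul_eq_mul, mul_comm]
        have hsmul := MultilinearMap.map_smul_univ (Matrix.detRowAlternating (n := Fin n)
            (R := MvPolynomial (Fin (n + 1)) ℤ)).toMultilinearMap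
          (fun c : Fin n => (X (Fin.last n) : MvPolynomial (Fin (n + 1)) ℤ) ^ (l (c : ℕ) - r c))
          (fun c : Fin n => fun i : Fin n =>
            (X i.castSucc : MvPolynomial (Fin (n + 1)) ℤ) ^ (r c + (n - 1 - (c : ℕ))))
        simp only [AlternatingMap.coe_multilinearMap] at hsmul
        rw [hrow, hsmul]
        rw [Finset.prod_pow_eq_pow_sum, smul_eq_mul]
        congr 1
        have : rename Fin.castSucc (altM n (ext n r)) =
            ((Matrix.of fun i c : Fin n => (X i : MvPolynomial (Fin n) ℤ) ^
              (ext n r (c : ℕ) + (n - 1 - (c : ℕ)))).map (rename Fin.castSucc)).det := by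
          rw [altM]
          exact AlgHom.map_det (rename Fin.castSucc) _
        rw [this]
        have hmap : ((Matrix.of fun i c : Fin n => (X i : MvPolynomial (Fin n) ℤ) ^
            (ext n r (c : ℕ) + (n - 1 - (c : ℕ)))).map (rename Fin.castSucc)) =
            Matrix.of fun i c : Fin n => (X i.castSucc : MvPolynomial (Fin (n + 1)) ℤ) ^
              (r c + (n - 1 - (c : ℕ))) := by
          ext i c
          simp only [Matrix.map_apply, Matrix.of_apply, map_pow, rename_X]
          congr 2
          rw [ext, dif_pos c.isLt]
        rw [hmap]
        rw [← Matrix.det_transpose]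
        rfl
      rw [hGdet]
      rw [Finset.mul_sum, Finset.mul_sum]
      apply Finset.sum_congr rfl
      intro g hg
      have hW : Wt n l g = l n + ∑ c : Fin n, (l (c : ℕ) - g c) := rfl
      rw [hW, pow_add]
      ring
    · intro c _ hc
      rw [hzero c hc]
      ring
    · intro h
      exact absurd (Finset.mem_univ _) h

end Alt

/-! ### Staircase -/

section Staircase

open MvPolynomial

lemma X_sub_X_ne_zero {n : ℕ} (i j : Fin n) (hij : i ≠ j) :
    (X i - X j : MvPolynomial (Fin n) ℤ) ≠ 0 := by
  intro h
  have h2 := congrArg (MvPolynomial.eval (fun t => if t = i then (1 : ℤ) else 0)) h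
  rw [map_sub, eval_X, eval_X, map_zero] at h2
  rw [if_pos rfl, if_neg (Ne.symm hij)] at h2
  simp at h2

lemma vandP_ne_zero (n : ℕ) : vandP n ≠ 0 := by
  rw [vandP]
  rw [Finset.prod_ne_zero_iff]
  intro j _
  rw [Finset.prod_ne_zero_iff]
  intro i _
  by_cases hij : i < j
  · rw [if_pos hij]
    exact X_sub_X_ne_zero i j (ne_of_lt hij)
  · rw [if_neg hij]
    exact one_ne_zero

theorem schur_staircase (N k : ℕ) :
    schur (N + 1) (fun i => k * (N - i)) ν0 =
      ∏ j : Fin (N + 1), ∏ i : Fin (N + 1),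
        if i < j then (∑ a ∈ Finset.range (k + 1),
          (X i : MvPolynomial (Fin (N + 1)) ℤ) ^ a * X j ^ (k - a)) else 1 := by
  have hp : IsPartition (fun i => k * (N - i)) :=
    ⟨fun i j hij => Nat.mul_le_mul_left _ (Nat.sub_le_sub_left hij N),
      ⟨N + 1, fun i hi => by
        have h0 : N - i = 0 := by omega
        simp [h0]⟩⟩
  have hs : ∀ i, N + 1 ≤ i → k * (N - i) = 0 := fun i hi => by
    have h0 : N - i = 0 := by omega
    simp [h0]
  have h1 := schur_alt (N + 1) (fun i => k * (N - i)) hp hs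
  have hdet : altM (N + 1) (fun i => k * (N - i)) =
      ∏ j : Fin (N + 1), ∏ i : Fin (N + 1),
        if i < j then ((X i : MvPolynomial (Fin (N + 1)) ℤ) ^ (k + 1) - X j ^ (k + 1)) else 1 := by
    rw [← det_rev_vandermonde (N + 1) (fun i => (X i : MvPolynomial (Fin (N + 1)) ℤ) ^ (k + 1)),
      altM]
    congr 1
    refine Matrix.ext fun i c => ?_
    simp only [Matrix.of_apply]
    rw [← pow_mul]
    congr 1
    show k * (N - (c : ℕ)) + (N - (c : ℕ)) = (k + 1) * (N - (c : ℕ))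
    rw [Nat.succ_mul]
  have hfac : ∀ i j : Fin (N + 1),
      ((X i : MvPolynomial (Fin (N + 1)) ℤ) ^ (k + 1) - X j ^ (k + 1)) =
        (X i - X j) * (∑ a ∈ Finset.range (k + 1), X i ^ a * X j ^ (k - a)) := by
    intro i j
    have hg := geom_sum₂_mul (X i : MvPolynomial (Fin (N + 1)) ℤ) (X j) (k + 1)
    rw [← hg, mul_comm]
    rfl
  have hsplit : (∏ j : Fin (N + 1), ∏ i : Fin (N + 1),
      if i < j then ((X i : MvPolynomial (Fin (N + 1)) ℤ) ^ (k + 1) - X j ^ (k + 1)) else 1) =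
      vandP (N + 1) * ∏ j : Fin (N + 1), ∏ i : Fin (N + 1),
        if i < j then (∑ a ∈ Finset.range (k + 1),
          (X i : MvPolynomial (Fin (N + 1)) ℤ) ^ a * X j ^ (k - a)) else 1 := by
    rw [vandP, ← Finset.prod_mul_distrib]
    apply Finset.prod_congr rfl
    intro j _
    rw [← Finset.prod_mul_distrib]
    apply Finset.prod_congr rfl
    intro i _
    by_cases hij : i < j
    · rw [if_pos hij, if_pos hij, if_pos hij, hfac i j]
    · rw [if_neg hij, if_neg hij, if_neg hij, mul_one]
  rw [hdet, hsplit] at h1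
  have hcancel := mul_right_cancel₀ (vandP_ne_zero (N + 1))
    (show schur (N + 1) (fun i => k * (N - i)) ν0 * vandP (N + 1) =
      (∏ j : Fin (N + 1), ∏ i : Fin (N + 1),
        if i < j then (∑ a ∈ Finset.range (k + 1),
          (X i : MvPolynomial (Fin (N + 1)) ℤ) ^ a * X j ^ (k - a)) else 1) * vandP (N + 1) by
      rw [h1]; ring)
  exact hcancel

end Staircase

end Stair

/-- For the staircase partition `λ_N = (N, N−1, …, 1, 0)` in `N+1`
variables, all complex roots of `s_{kλ_N}(z, 1, …, 1) = 0` lie on the unit circle,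
for every positive integer `k`. -/
theorem staircase_roots_on_unit_circle (N k : ℕ) (hk : 0 < k) (z : ℂ)
    (hz : MvPolynomial.aeval (fun i : Fin (N + 1) => if i = 0 then z else 1)
        (schur (N + 1) (fun i => k * (N - i)) (fun _ => 0)) = 0) :
    ‖z‖ = 1 := by
  classical
  rw [Stair.schur_staircase N k, map_prod] at hz
  obtain ⟨j, -, hj⟩ := Finset.prod_eq_zero_iff.mp hz
  rw [map_prod] at hj
  obtain ⟨i, -, hij⟩ := Finset.prod_eq_zero_iff.mp hj
  rw [apply_ite (MvPolynomial.aeval (fun i : Fin (N + 1) => if i = 0 then z else 1))] at hij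
  by_cases hlt : i < j
  · rw [if_pos hlt, map_sum] at hij
    have hij' : (∑ a ∈ Finset.range (k + 1),
        (if i = 0 then z else 1) ^ a * (if j = 0 then z else 1) ^ (k - a)) = 0 := by
      rw [← hij]
      apply Finset.sum_congr rfl
      intro a _
      rw [map_mul, map_pow, map_pow, MvPolynomial.aeval_X, MvPolynomial.aeval_X]
    have hj0 : j ≠ 0 := by
      intro h
      subst h
      exact absurd hlt (by simp [Fin.lt_def])
    rw [if_neg hj0] at hij'
    by_cases hi0 : i = 0
    · rw [if_pos hi0] at hij'
      have hgeom : (∑ a ∈ Finset.range (k + 1), z ^ a) = 0 := by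
        rw [← hij']
        apply Finset.sum_congr rfl
        intro a _
        rw [one_pow, mul_one]
      have hpow : z ^ (k + 1) = 1 := by
        have hgm := geom_sum_mul z (k + 1)
        rw [hgeom, zero_mul] at hgm
        have := eq_of_sub_eq_zero hgm.symm
        exact this
      have habs : ‖z‖ ^ (k + 1) = 1 := by
        rw [← norm_pow, hpow, norm_one]
      rcases lt_trichotomy ‖z‖ 1 with h | h | h
      · exfalso
        have h2 : ‖z‖ ^ (k + 1) < 1 :=
          pow_lt_one₀ (norm_nonneg z) h (Nat.succ_ne_zero k)
        rw [habs] at h2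
        exact lt_irrefl _ h2
      · exact h
      · exfalso
        have h2 : 1 < ‖z‖ ^ (k + 1) := one_lt_pow₀ h (Nat.succ_ne_zero k)
        rw [habs] at h2
        exact lt_irrefl _ h2
    · exfalso
      rw [if_neg hi0] at hij'
      simp only [one_pow, mul_one, Finset.sum_const, Finset.card_range, nsmul_eq_mul] at hij'
      have hne : ((k : ℂ) + 1) ≠ 0 := Nat.cast_add_one_ne_zero k
      push_cast at hij'
      exact hne hij'
  · rw [if_neg hlt, map_one] at hij
    exact absurd hij one_ne_zero
end

section
/- Let μ ⊇ ν be partitions with μ ≠ ν and let T_1, ..., T_d be the SSYTs of shape μ/ν with entries in {1,...,n}. Then for j ≥ 1, every SSYT of shape jμ/jν with entries in {1,...,n} can be written as S ⊠ T for some T ∈ {T_1,...,T_d} and some SSYT S of shape (j−1)μ/(j−1)ν; moreover the multiset ⋃_i { S ⊠ T_i : S SSYT of shape (j−1)μ/(j−1)ν } contains each SSYT of shape jμ/jν at least once. -/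
open scoped BigOperators

-- Auxiliary lemmas
private lemma getD_map_range (f : ℕ → ℕ) {k p : ℕ} (hp : p < k) :
    ((List.range k).map f).getD p 0 = f p := by
  rw [List.getD_eq_getElem _ _ (by simpa using hp)]
  simp

private lemma getD_sorted_mono {L : List ℕ} (hL : L.Pairwise (· ≤ ·)) {a b : ℕ}
    (hab : a ≤ b) (hb : b < L.length) : L.getD a 0 ≤ L.getD b 0 := by
  have ha : a < L.length := lt_of_le_of_lt hab hb
  rw [List.getD_eq_getElem _ _ ha, List.getD_eq_getElem _ _ hb]
  exact hL.rel_get_of_le (a := ⟨a, ha⟩) (b := ⟨b, hb⟩) hab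

private lemma getD_mem {L : List ℕ} {a : ℕ} (ha : a < L.length) : L.getD a 0 ∈ L := by
  rw [List.getD_eq_getElem _ _ ha]; exact List.getElem_mem ha

private lemma sorted_map_range {L : List ℕ} (hL : L.Pairwise (· ≤ ·)) (f : ℕ → ℕ) (K : ℕ)
    (hmono : ∀ a b, a ≤ b → f a ≤ f b) (hbd : ∀ a, a < K → f a < L.length) :
    ((List.range K).map fun q => L.getD (f q) 0).Pairwise (· ≤ ·) := by
  rw [List.pairwise_iff_getElem]
  intro a b ha hb hab
  simp only [List.length_map, List.length_range] at ha hb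
  simp only [List.getElem_map, List.getElem_range]
  exact getD_sorted_mono hL (hmono a b (by omega)) (hbd b hb)

-- arithmetic helpers
private lemma tau_lt {k q M : ℕ} (h : q < M) : q * (k+1) + k < (k+1) * M := by
  have h2 : (q+1)*(k+1) ≤ M*(k+1) := Nat.mul_le_mul_right _ (by omega)
  have h3 : (q+1)*(k+1) = q*(k+1) + (k+1) := by ring
  have h4 : M*(k+1) = (k+1)*M := Nat.mul_comm _ _
  omega

private lemma iota_eq (k p : ℕ) : p + p / k = (p / k) * (k+1) + p % k := by
  have h1 := Nat.div_add_mod p k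
  have h2 : (p / k) * (k+1) = (p/k) * k + p/k := by ring
  have h3 : k * (p/k) = (p/k) * k := Nat.mul_comm _ _
  omega

private lemma iota_lt {k p M : ℕ} (h : p < k * M) : p + p / k < (k+1) * M := by
  have hk : 0 < k := Nat.pos_of_ne_zero (by rintro rfl; simp at h)
  have hq : p / k < M := (Nat.div_lt_iff_lt_mul hk).mpr (by rw [Nat.mul_comm] at h; exact h)
  have hr : p % k < k := Nat.mod_lt _ hk
  have := iota_eq k p
  have := tau_lt (k := k) hq
  omega

private lemma iota_mono {k : ℕ} : ∀ a b : ℕ, a ≤ b → a + a / k ≤ b + b / k :=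
  fun a b h => Nat.add_le_add h (Nat.div_le_div_right h)

private lemma iota_strictmono {k : ℕ} : StrictMono (fun p : ℕ => p + p / k) :=
  fun a b h => Nat.add_lt_add_of_lt_of_le h (Nat.div_le_div_right h.le)

private lemma tau_strictmono {k : ℕ} : StrictMono (fun q : ℕ => q * (k+1) + k) :=
  fun a b h => Nat.add_lt_add_right ((Nat.mul_lt_mul_right (Nat.succ_pos k)).mpr h) k


/-- For `μ ⊋ ν` and `j ≥ 1`, every SSYT of shape `jμ/jν` with entries
in `{1,…,n}` can be written as `S ⊠ T` with `T` an SSYT of shape `μ/ν` and `S` an SSYT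
of shape `(j−1)μ/(j−1)ν`; i.e. the multiset `⋃_T { S ⊠ T }` contains each SSYT of shape
`jμ/jν` at least once. -/
theorem tabs_stretched_decompose (n : ℕ) (mu nu : ℕ → ℕ)
    (hm : IsPartition mu) (hn : IsPartition nu) (hnm : ∀ i, nu i ≤ mu i)
    (hne : mu ≠ nu) (j : ℕ) (hj : 1 ≤ j)
    (U : SkewTab n) (hU : U ∈ Tabs n (fun i => j * mu i) (fun i => j * nu i)) :
    ∃ S T : SkewTab n,
      S ∈ Tabs n (fun i => (j - 1) * mu i) (fun i => (j - 1) * nu i) ∧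
      T ∈ Tabs n mu nu ∧ U = S.ins T := by
  obtain ⟨hUss, hUin, hUout⟩ := hU
  obtain ⟨hUp1, hUp2, hUsort, hUmem, hUcol⟩ := hUss
  obtain ⟨k, rfl⟩ : ∃ k, j = k + 1 := ⟨j - 1, by omega⟩
  clear hj hne
  simp only [Nat.add_sub_cancel]
  set m : ℕ → ℕ := fun i => mu i - nu i with hm_def
  have hmum : ∀ i, mu i = nu i + m i := fun i => by have := hnm i; simp [hm_def]; omega
  have hlen : ∀ i, (U.row i).length = (k+1) * m i := by
    intro i
    have h1 := congrFun hUout i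
    have h2 := congrFun hUin i
    have h3 : (k+1) * mu i = (k+1)*nu i + (k+1)*m i := by rw [hmum i, Nat.mul_add]
    simp only [SkewTab.outer] at h1
    omega
  set T : SkewTab n :=
    ⟨nu, fun i => (List.range (m i)).map fun q => (U.row i).getD (q * (k+1) + k) 0⟩ with hT
  set S : SkewTab n :=
    ⟨fun i => k * nu i, fun i => (List.range (k * m i)).map fun p => (U.row i).getD (p + p / k) 0⟩
      with hS
  have hTout : T.outer = mu := by
    funext i
    simp only [SkewTab.outer, hT, List.length_map, List.length_range]
    have := hmum i
    omega
  have hSout : S.outer = fun i => k * mu i := by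
    funext i
    simp only [SkewTab.outer, hS, List.length_map, List.length_range]
    rw [hmum i, Nat.mul_add]
  have hUin' : ∀ i, U.inner i = (k+1) * nu i := fun i => congrFun hUin i
  have hUout' : ∀ i, U.outer i = (k+1) * mu i := fun i => congrFun hUout i
  have hUcol' : ∀ i c, (k+1) * nu i ≤ c → c < (k+1) * mu i → (k+1) * nu (i+1) ≤ c →
      c < (k+1) * mu (i+1) → U.entry i c < U.entry (i+1) c := by
    intro i c a1 a2 a3 a4
    exact hUcol i c (by rw [hUin' i]; exact a1) (by rw [hUout' i]; exact a2)
      (by rw [hUin' (i+1)]; exact a3) (by rw [hUout' (i+1)]; exact a4)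
  have hTentry : ∀ i c, nu i ≤ c → c < mu i → T.entry i c = U.entry i (c * (k+1) + k) := by
    intro i c h1 h2
    have hcm : c - nu i < m i := by have := hmum i; omega
    simp only [SkewTab.entry, hT]
    rw [getD_map_range _ hcm, hUin' i]
    congr 1
    have e1 : c * (k+1) = (nu i) * (k+1) + (c - nu i) * (k+1) := by
      rw [← Nat.add_mul]; congr 1; omega
    have e2 : (nu i) * (k+1) = (k+1) * nu i := Nat.mul_comm _ _
    omega
  have hSentry : ∀ i c, k * nu i ≤ c → c < k * mu i →
      S.entry i c = U.entry i (c + c / k) := by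
    intro i c h1 h2
    have hk : 0 < k := Nat.pos_of_ne_zero (by rintro rfl; simp at h2)
    have hmul : k * mu i = k * nu i + k * m i := by rw [hmum i, Nat.mul_add]
    have hpm : c - k * nu i < k * m i := by omega
    simp only [SkewTab.entry, hS]
    rw [getD_map_range _ hpm, hUin' i]
    congr 1
    obtain ⟨a, ha⟩ : ∃ a, c = k * nu i + a := ⟨c - k * nu i, by omega⟩
    subst ha
    simp only [Nat.add_sub_cancel_left]
    rw [Nat.mul_add_div hk]
    have e2 : (k+1) * nu i = k * nu i + nu i := by ring
    clear hpm h1 h2 hmul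
    rw [e2]
    generalize a / k = D
    generalize k * nu i = B
    omega
  have hTss : T.IsSSYT := by
    refine ⟨hn, by rw [hTout]; exact hm, ?_, ?_, ?_⟩
    · intro i
      exact sorted_map_range (hUsort i) _ _
        (fun a b h => Nat.add_le_add_right (Nat.mul_le_mul h (Nat.le_refl _)) k)
        (fun a ha => by rw [hlen i]; exact tau_lt ha)
    · intro i x hx
      simp only [hT, List.mem_map, List.mem_range] at hx
      obtain ⟨q, hq, rfl⟩ := hx
      exact hUmem i _ (getD_mem (by rw [hlen i]; exact tau_lt hq))
    · intro i c h1 h2 h3 h4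
      rw [hTout] at h2 h4
      have h1' : nu i ≤ c := h1
      have h3' : nu (i+1) ≤ c := h3
      rw [hTentry i c h1' h2, hTentry (i+1) c h3' h4]
      refine hUcol' i _ ?_ ?_ ?_ ?_
      · have := Nat.mul_le_mul (Nat.le_refl (k+1)) h1'
        have e : c * (k+1) = (k+1) * c := Nat.mul_comm _ _
        omega
      · exact tau_lt h2
      · have := Nat.mul_le_mul (Nat.le_refl (k+1)) h3'
        have e : c * (k+1) = (k+1) * c := Nat.mul_comm _ _
        omega
      · exact tau_lt h4
  have hSss : S.IsSSYT := by
    refine ⟨?_, ?_, ?_, ?_, ?_⟩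
    · constructor
      · intro a b hab; exact Nat.mul_le_mul (Nat.le_refl k) (hn.1 a b hab)
      · obtain ⟨N, hN⟩ := hn.2
        exact ⟨N, fun i hi => by simp only [hS]; rw [hN i hi, Nat.mul_zero]⟩
    · rw [hSout]
      constructor
      · intro a b hab; exact Nat.mul_le_mul (Nat.le_refl k) (hm.1 a b hab)
      · obtain ⟨N, hN⟩ := hm.2
        exact ⟨N, fun i hi => by show k * mu i = 0; rw [hN i hi, Nat.mul_zero]⟩
    · intro i
      exact sorted_map_range (hUsort i) _ _ iota_mono
        (fun a ha => by rw [hlen i]; exact iota_lt ha)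
    · intro i x hx
      simp only [hS, List.mem_map, List.mem_range] at hx
      obtain ⟨p, hp, rfl⟩ := hx
      exact hUmem i _ (getD_mem (by rw [hlen i]; exact iota_lt hp))
    · intro i c h1 h2 h3 h4
      simp only [hSout] at h2 h4
      have h1' : k * nu i ≤ c := h1
      have h3' : k * nu (i+1) ≤ c := h3
      have hk : 0 < k := Nat.pos_of_ne_zero (by rintro rfl; simp at h2)
      rw [hSentry i c h1' h2, hSentry (i+1) c h3' h4]
      refine hUcol' i _ ?_ ?_ ?_ ?_
      · have hdq : nu i ≤ c / k := (Nat.le_div_iff_mul_le hk).mpr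
          (by have := Nat.mul_comm k (nu i); omega)
        calc (k+1) * nu i = k * nu i + nu i := by ring
          _ ≤ c + c / k := Nat.add_le_add h1' hdq
      · exact iota_lt h2
      · have hdq : nu (i+1) ≤ c / k := (Nat.le_div_iff_mul_le hk).mpr
          (by have := Nat.mul_comm k (nu (i+1)); omega)
        calc (k+1) * nu (i+1) = k * nu (i+1) + nu (i+1) := by ring
          _ ≤ c + c / k := Nat.add_le_add h3' hdq
      · exact iota_lt h4
  have hrow : ∀ i, U.row i = (S.row i ++ T.row i).mergeSort (fun a b => decide (a ≤ b)) := by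
    intro i
    have hidx : S.row i ++ T.row i
        = ((((List.range (k * m i)).map fun p => p + p / k)
            ++ ((List.range (m i)).map fun q => q * (k+1) + k)).map
            fun t => (U.row i).getD t 0) := by
      simp only [hS, hT, List.map_append, List.map_map, Function.comp_def]
    have hnd1 : (((List.range (k * m i)).map fun p => p + p / k)).Nodup :=
      (List.nodup_range).map iota_strictmono.injective
    have hnd2 : (((List.range (m i)).map fun q => q * (k+1) + k)).Nodup :=
      (List.nodup_range).map tau_strictmono.injective
    have hdisj : List.Disjoint ((List.range (k * m i)).map fun p => p + p / k)
        ((List.range (m i)).map fun q => q * (k+1) + k) := by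
      intro a ha hb
      simp only [List.mem_map, List.mem_range] at ha hb
      obtain ⟨p, hp, rfl⟩ := ha
      obtain ⟨q, hq, hpq⟩ := hb
      have hk : 0 < k := Nat.pos_of_ne_zero (by rintro rfl; simp at hp)
      have hrk : p % k < k := Nat.mod_lt _ hk
      have h1 : (p + p / k) % (k+1) = p % k := by
        rw [iota_eq k p, Nat.add_comm, Nat.add_mul_mod_self_right]
        exact Nat.mod_eq_of_lt (by omega)
      have h2 : (q * (k+1) + k) % (k+1) = k := by
        rw [Nat.add_comm, Nat.add_mul_mod_self_right]
        exact Nat.mod_eq_of_lt (by omega)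
      have h3 : p % k = k := by rw [← h1, ← hpq, h2]
      omega
    have hsub : ((((List.range (k * m i)).map fun p => p + p / k)
        ++ ((List.range (m i)).map fun q => q * (k+1) + k))) ⊆ List.range ((k+1) * m i) := by
      intro a ha
      simp only [List.mem_append, List.mem_map, List.mem_range] at ha ⊢
      rcases ha with ⟨p, hp, rfl⟩ | ⟨q, hq, rfl⟩
      · exact iota_lt hp
      · exact tau_lt hq
    have hperm : List.Perm ((((List.range (k * m i)).map fun p => p + p / k)
        ++ ((List.range (m i)).map fun q => q * (k+1) + k))) (List.range ((k+1) * m i)) := by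
      apply List.Subperm.perm_of_length_le
        (List.subperm_of_subset (List.Nodup.append hnd1 hnd2 hdisj) hsub)
      simp only [List.length_append, List.length_map, List.length_range]
      have : (k+1) * m i = k * m i + m i := by ring
      omega
    have hLid : (List.range ((k+1) * m i)).map (fun t => (U.row i).getD t 0) = U.row i := by
      apply List.ext_getElem
      · simp [hlen i]
      · intro t h1 h2
        simp only [List.getElem_map, List.getElem_range]
        exact List.getD_eq_getElem _ _ h2
    have hperm2 : List.Perm (S.row i ++ T.row i) (U.row i) := by
      rw [hidx]
      conv_rhs => rw [← hLid]
      exact hperm.map _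
    have hms : List.Perm ((S.row i ++ T.row i).mergeSort (fun a b => decide (a ≤ b))) (U.row i) :=
      (List.mergeSort_perm _ _).trans hperm2
    have hsorted : ((S.row i ++ T.row i).mergeSort (fun a b => decide (a ≤ b))).Pairwise (· ≤ ·) := by
      have hp := List.pairwise_mergeSort (le := fun a b => decide (a ≤ b))
        (by intro a b c hab hbc; simp only [decide_eq_true_eq] at *; omega)
        (by intro a b; simpa using Nat.le_total a b) (S.row i ++ T.row i)
      exact hp.imp (by intro a b h; simpa using h)
    exact (List.Perm.eq_of_pairwise' hsorted (hUsort i) hms).symm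
  refine ⟨S, T, ⟨hSss, rfl, hSout⟩, ⟨hTss, rfl, hTout⟩, ?_⟩
  have h1 : U.inner = fun i => S.inner i + T.inner i := by
    funext i'
    have := hUin' i'
    have e : (k+1) * nu i' = k * nu i' + nu i' := by ring
    show U.inner i' = k * nu i' + nu i'
    omega
  have h2 : U.row = fun i => (S.row i ++ T.row i).mergeSort (fun a b => decide (a ≤ b)) :=
    funext hrow
  calc U = ⟨U.inner, U.row⟩ := rfl
    _ = S.ins T := by rw [h1, h2]; rfl
end
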